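/- Let τ > 0 and let U : [0,τ] → ℝ^m be a C² function satisfying U''(t) = A(t) U(t) + B(t) for continuous A : [0,τ] → ℝ^{m×m} and B : [0,τ] → ℝ^m, with boundary conditions U(0) = U(τ) = 0. If ‖A(t)‖ τ² ≤ 1 for all t ∈ [0,τ], then sup_{t∈[0,τ]} ‖U(t)‖ ≤ τ² · sup_{s∈[0,τ]} ‖B(s)‖. -/

import Mathlib

open Set

lemma scalar_parab (τ K : ℝ) (hτ : 0 < τ) (g g' g'' : ℝ → ℝ)
    (h1 : ∀ s ∈ Icc 0 τ, HasDerivWithinAt g (g' s) (Icc 0 τ) s)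
    (h2 : ∀ s ∈ Icc 0 τ, HasDerivWithinAt g' (g'' s) (Icc 0 τ) s)
    (hKnn : 0 ≤ K) (hK : ∀ s ∈ Icc 0 τ, -K ≤ g'' s)
    (h0 : g 0 = 0) (hT : g τ = 0) {t : ℝ} (ht : t ∈ Icc 0 τ) :
    g t ≤ K * τ ^ 2 / 8 := by
  set f : ℝ → ℝ := fun s => g s + (K / 2 * s ^ 2 - K * τ / 2 * s) with hf
  have hint : interior (Icc (0:ℝ) τ) = Ioo 0 τ := interior_Icc
  have hpoly : ∀ s : ℝ, HasDerivAt (fun s => K / 2 * s ^ 2 - K * τ / 2 * s)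
      (K * s - K * τ / 2) s := by
    intro s
    have h1 : HasDerivAt (fun s : ℝ => K / 2 * s ^ 2) (K / 2 * (2 * s)) s :=
      (hasDerivAt_pow 2 s).const_mul (K / 2) |>.congr_deriv (by ring)
    have h2 : HasDerivAt (fun s : ℝ => K * τ / 2 * s) (K * τ / 2) s := by
      simpa using (hasDerivAt_id s).const_mul (K * τ / 2)
    exact (h1.sub h2).congr_deriv (by ring)
  have hconv : ConvexOn ℝ (Icc 0 τ) f := by
    apply convexOn_of_hasDerivWithinAt2_nonneg (f' := fun s => g' s + (K * s - K * τ / 2))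
      (f'' := fun s => g'' s + K) (convex_Icc 0 τ)
    · exact fun s hs => ((h1 s hs).continuousWithinAt.add
        (hpoly s).continuousAt.continuousWithinAt)
    · intro x hx
      rw [hint] at hx ⊢
      exact ((h1 x (Ioo_subset_Icc_self hx)).mono Ioo_subset_Icc_self).add
        (hpoly x).hasDerivWithinAt
    · intro x hx
      rw [hint] at hx ⊢
      have hlin : HasDerivAt (fun s : ℝ => K * s - K * τ / 2) K x := by
        simpa using ((hasDerivAt_id x).const_mul K).sub_const (K * τ / 2)
      exact ((h2 x (Ioo_subset_Icc_self hx)).mono Ioo_subset_Icc_self).add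
        hlin.hasDerivWithinAt
    · intro x hx
      rw [hint] at hx
      linarith [hK x (Ioo_subset_Icc_self hx)]
  obtain ⟨ht0, ht1⟩ := ht
  have hft : f t ≤ 0 := by
    have ha : (0:ℝ) ≤ 1 - t / τ := by
      rw [sub_nonneg]; exact div_le_one_of_le₀ ht1 hτ.le
    have hb' : (0:ℝ) ≤ t / τ := by positivity
    have hab : (1 - t / τ) + t / τ = 1 := by ring
    have := hconv.2 (left_mem_Icc.2 hτ.le) (right_mem_Icc.2 hτ.le) ha hb' hab
    simp only [smul_eq_mul, mul_zero, zero_add] at this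
    have hcomb : t / τ * τ = t := div_mul_cancel₀ _ hτ.ne'
    rw [hcomb] at this
    have hf0 : f 0 = 0 := by simp [hf, h0]
    have hfτ : f τ = 0 := by simp only [hf, hT]; ring
    calc f t ≤ (1 - t / τ) * f 0 + t / τ * f τ := this
      _ = 0 := by rw [hf0, hfτ]; ring
  -- g t ≤ -(K/2 t² - Kτ/2 t) = K/2 t (τ - t) ≤ K τ²/8
  have : g t ≤ K / 2 * t * (τ - t) := by simp only [hf] at hft; nlinarith
  nlinarith [sq_nonneg (τ - 2 * t), hKnn]

/-- Let `U : [0,τ] → ℝ^m` be C² with `U(0) = U(τ) = 0`, satisfying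
`U'' = A U + B` on `[0,τ]` for continuous `A`, `B`. If `‖A(t)‖ τ² ≤ 1` on `[0,τ]`,
then `‖U(t)‖ ≤ τ² sup ‖B‖` on `[0,τ]` (the sup being encoded by any upper bound `b`
of `‖B‖` on `[0,τ]`). -/
theorem sup_bound_of_second_order_ODE (m : ℕ) (τ : ℝ) (hτ : 0 < τ)
    (U U' U'' : ℝ → EuclideanSpace ℝ (Fin m))
    (A : ℝ → EuclideanSpace ℝ (Fin m) →L[ℝ] EuclideanSpace ℝ (Fin m))
    (B : ℝ → EuclideanSpace ℝ (Fin m))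
    (hA : ContinuousOn A (Set.Icc 0 τ)) (hB : ContinuousOn B (Set.Icc 0 τ))
    (hU' : ∀ t ∈ Set.Icc 0 τ, HasDerivWithinAt U (U' t) (Set.Icc 0 τ) t)
    (hU'' : ∀ t ∈ Set.Icc 0 τ, HasDerivWithinAt U' (U'' t) (Set.Icc 0 τ) t)
    (hU''cont : ContinuousOn U'' (Set.Icc 0 τ))
    (hODE : ∀ t ∈ Set.Icc 0 τ, U'' t = A t (U t) + B t)
    (hbdry0 : U 0 = 0) (hbdryτ : U τ = 0)
    (hAnorm : ∀ t ∈ Set.Icc 0 τ, ‖A t‖ * τ ^ 2 ≤ 1)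
    (b : ℝ) (hb : ∀ s ∈ Set.Icc 0 τ, ‖B s‖ ≤ b)
    (t : ℝ) (ht : t ∈ Set.Icc 0 τ) :
    ‖U t‖ ≤ τ ^ 2 * b := by
  have h0mem : (0:ℝ) ∈ Set.Icc 0 τ := Set.left_mem_Icc.2 hτ.le
  have hb0 : 0 ≤ b := le_trans (norm_nonneg _) (hb 0 h0mem)
  have hUcont : ContinuousOn U (Set.Icc 0 τ) :=
    fun s hs => (hU' s hs).continuousWithinAt
  obtain ⟨t₀, ht₀, hmax⟩ := isCompact_Icc.exists_isMaxOn (Set.nonempty_Icc.2 hτ.le)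
    hUcont.norm
  set M := ‖U t₀‖ with hM
  have hM0 : 0 ≤ M := norm_nonneg _
  set K : ℝ := M / τ ^ 2 + b with hKdef
  have hK0 : 0 ≤ K := by positivity
  -- per-point bound
  have key : ∀ s ∈ Set.Icc 0 τ, ‖U s‖ ≤ K * τ ^ 2 / 8 := by
    intro s hs
    rcases eq_or_ne (U s) 0 with h | h
    · rw [h, norm_zero]; positivity
    · set e := ‖U s‖⁻¹ • U s with he
      have hnorme : ‖e‖ = 1 := norm_smul_inv_norm h
      set g : ℝ → ℝ := fun r => inner ℝ (U r) e with hg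
      have hg' : ∀ r ∈ Set.Icc 0 τ,
          HasDerivWithinAt g (inner ℝ (U' r) e) (Set.Icc 0 τ) r := by
        intro r hr
        have := (hU' r hr).inner ℝ (hasDerivWithinAt_const r _ e)
        simpa using this
      have hg'' : ∀ r ∈ Set.Icc 0 τ,
          HasDerivWithinAt (fun r => (inner ℝ (U' r) e : ℝ)) (inner ℝ (U'' r) e)
            (Set.Icc 0 τ) r := by
        intro r hr
        have := (hU'' r hr).inner ℝ (hasDerivWithinAt_const r _ e)
        simpa using this
      have hbound : ∀ r ∈ Set.Icc 0 τ, -K ≤ (inner ℝ (U'' r) e : ℝ) := by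
        intro r hr
        have h1 : |(inner ℝ (U'' r) e : ℝ)| ≤ ‖U'' r‖ := by
          calc |(inner ℝ (U'' r) e : ℝ)| ≤ ‖U'' r‖ * ‖e‖ := abs_real_inner_le_norm _ _
            _ = ‖U'' r‖ := by rw [hnorme, mul_one]
        have h2 : ‖U'' r‖ ≤ K := by
          rw [hODE r hr]
          have hAr : ‖A r‖ ≤ 1 / τ ^ 2 := by
            rw [le_div_iff₀ (by positivity)]; exact hAnorm r hr
          have hUr : ‖U r‖ ≤ M := hmax hr
          calc ‖A r (U r) + B r‖ ≤ ‖A r (U r)‖ + ‖B r‖ := norm_add_le _ _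
            _ ≤ ‖A r‖ * ‖U r‖ + b := add_le_add ((A r).le_opNorm _) (hb r hr)
            _ ≤ 1 / τ ^ 2 * M + b := by
                have : ‖A r‖ * ‖U r‖ ≤ 1 / τ ^ 2 * M :=
                  mul_le_mul hAr hUr (norm_nonneg _) (by positivity)
                linarith
            _ = K := by rw [hKdef]; ring
        have := abs_le.1 h1
        linarith
      have hg0 : g 0 = 0 := by simp [hg, hbdry0]
      have hgτ : g τ = 0 := by simp [hg, hbdryτ]
      have hgs : g s = ‖U s‖ := by
        rw [hg]
        simp only [he, real_inner_smul_right]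
        rw [real_inner_self_eq_norm_sq, sq]
        rw [inv_mul_eq_div, mul_div_assoc, div_self (norm_ne_zero_iff.2 h), mul_one]
      rw [← hgs]
      exact scalar_parab τ K hτ g _ _ hg' hg'' hK0 hbound hg0 hgτ hs
  -- fixed point estimate at the max
  have hMbound : M ≤ K * τ ^ 2 / 8 := key t₀ ht₀
  have hτ2 : (0:ℝ) < τ ^ 2 := by positivity
  have hKτ : K * τ ^ 2 = M + b * τ ^ 2 := by
    rw [hKdef]; field_simp
  have hM7 : M ≤ b * τ ^ 2 / 7 := by
    have h8 : M ≤ (M + b * τ ^ 2) / 8 := hKτ ▸ hMbound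
    linarith
  calc ‖U t‖ ≤ M := hmax ht
    _ ≤ τ ^ 2 * b := by nlinarith
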